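/- The Parry measure μ on Σ_A, determined by μ(C(α)) = v_{α_1} u_{α_n} / λ_max^{n-1} for admissible words α = α_1...α_n, is Ahlfors δ-regular for δ = log_λ(λ_max): there exists C ≥ 1 such that C^{-1} r^δ ≤ μ(B(x,r)) ≤ C r^δ for all x ∈ Σ_A and 0 < r ≤ 1. -/

import Mathlib

open MeasureTheory

/-- The one-sided shift space of the {0,1}-matrix A. -/
def SigmaA {N : ℕ} (A : Matrix (Fin N) (Fin N) ℝ) :=
  {x : ℕ → Fin N // ∀ n, A (x n) (x (n + 1)) = 1}

set_option maxHeartbeats 2000000 in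
/-- The Parry measure μ on Σ_A, determined on cylinders of admissible
words α = α_0...α_m (length m+1) by μ(C(α)) = v_{α_0} u_{α_m} / λ_max^m, is Ahlfors
δ-regular for δ = log_λ(λ_max): there is C ≥ 1 with
C⁻¹ r^δ ≤ μ(B(x,r)) ≤ C r^δ for all x and 0 < r ≤ 1. -/
theorem parry_ahlfors_regular (N : ℕ) (hN : 2 ≤ N) (A : Matrix (Fin N) (Fin N) ℝ)
    (h01 : ∀ i j, A i j = 0 ∨ A i j = 1)
    (hprim : ∃ k : ℕ, ∀ i j, 0 < (A ^ k) i j)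
    (lam : ℝ) (hlam : 1 < lam)
    (u v : Fin N → ℝ) (lamMax : ℝ) (hlamMax : 1 < lamMax)
    (hu : ∀ i, 0 < u i) (hv : ∀ i, 0 < v i)
    (hAu : ∀ i, ∑ j, A i j * u j = lamMax * u i)
    (hAv : ∀ j, ∑ i, v i * A i j = lamMax * v j)
    (hnorm : ∑ i, u i * v i = 1)
    [MeasurableSpace (SigmaA A)] (μ : Measure (SigmaA A))
    (hμ : ∀ (m : ℕ) (w : ℕ → Fin N), (∀ i, i + 1 ≤ m → A (w i) (w (i + 1)) = 1) →
      μ {x : SigmaA A | ∀ i ≤ m, x.1 i = w i} =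
        ENNReal.ofReal (v (w 0) * u (w m) / lamMax ^ m))
    (d : SigmaA A → SigmaA A → ℝ) (hd0 : ∀ x, d x x = 0)
    (hd : ∀ x y (h : x.1 ≠ y.1),
      d x y = lam ^ (-(Nat.find (Function.ne_iff.mp h) : ℤ))) :
    ∃ C : ℝ, 1 ≤ C ∧ ∀ (x : SigmaA A) (r : ℝ), 0 < r → r ≤ 1 →
      ENNReal.ofReal (C⁻¹ * r ^ Real.logb lam lamMax) ≤ μ {y | d x y ≤ r} ∧
      μ {y | d x y ≤ r} ≤ ENNReal.ofReal (C * r ^ Real.logb lam lamMax) := by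
  -- positivity basics
  have hlam0 : (0:ℝ) < lam := by linarith
  have hM0 : (0:ℝ) < lamMax := by linarith
  have hδ : 0 < Real.logb lam lamMax := Real.logb_pos hlam hlamMax
  set δ := Real.logb lam lamMax with hδdef
  -- key rpow computation
  have hkey : ∀ k : ℕ, ((lam ^ k)⁻¹ : ℝ) ^ δ = (lamMax ^ k)⁻¹ := by
    intro k
    have h1 : ((lam ^ k)⁻¹ : ℝ) = lam ^ (-(k:ℝ)) := by
      rw [Real.rpow_neg hlam0.le, Real.rpow_natCast]
    rw [h1, ← Real.rpow_natCast lamMax k, ← Real.rpow_neg hM0.le,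
      ← Real.rpow_logb hlam0 (ne_of_gt hlam) hM0 (x := lamMax)]
    rw [← Real.rpow_mul hlam0.le, ← Real.rpow_mul hlam0.le, mul_comm]
  -- extrema of u and v
  haveI : NeZero N := ⟨by omega⟩
  obtain ⟨i₁, hi₁⟩ := Finite.exists_min u
  obtain ⟨i₂, hi₂⟩ := Finite.exists_min v
  obtain ⟨i₃, hi₃⟩ := Finite.exists_max u
  obtain ⟨i₄, hi₄⟩ := Finite.exists_max v
  set mu := u i₁
  set mv := v i₂
  set Mu := u i₃
  set Mv := v i₄
  have hmu : 0 < mu := hu i₁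
  have hmv : 0 < mv := hv i₂
  have hMu : 0 < Mu := hu i₃
  have hMv : 0 < Mv := hv i₄
  have h2a : (1:ℝ) ≤ lamMax ^ 2 := by nlinarith
  have h2b : (1:ℝ) ≤ 1 + Mu * Mv := by nlinarith [mul_pos hMu hMv]
  have hinv : (0:ℝ) < (mu * mv)⁻¹ := inv_pos.mpr (mul_pos hmu hmv)
  have h2c : (1:ℝ) ≤ 1 + (mu * mv)⁻¹ := by linarith
  set P := lamMax ^ 2 * (1 + Mu * Mv) with hPdef
  have hP1 : (1:ℝ) ≤ P := by
    calc (1:ℝ) = 1 * 1 := by ring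
      _ ≤ lamMax ^ 2 * (1 + Mu * Mv) := mul_le_mul h2a h2b (by norm_num) (by positivity)
  have hP0 : (0:ℝ) < P := by linarith
  refine ⟨P * (1 + (mu * mv)⁻¹), ?_, ?_⟩
  · calc (1:ℝ) = 1 * 1 := by ring
      _ ≤ P * (1 + (mu * mv)⁻¹) := mul_le_mul hP1 h2c (by norm_num) (by positivity)
  set C := P * (1 + (mu * mv)⁻¹) with hCdef
  have hC0 : (0:ℝ) < C := by positivity
  have hC1 : (mu * mv)⁻¹ ≤ C := by
    calc (mu * mv)⁻¹ ≤ 1 + (mu * mv)⁻¹ := by linarith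
      _ ≤ P * (1 + (mu * mv)⁻¹) := le_mul_of_one_le_left (by positivity) hP1
  have hCinv : C⁻¹ ≤ mu * mv := by
    rw [inv_le_comm₀ hC0 (mul_pos hmu hmv)]
    exact hC1
  have hC2 : lamMax ^ 2 * (Mu * Mv) ≤ C := by
    calc lamMax ^ 2 * (Mu * Mv) ≤ P := by
          apply mul_le_mul_of_nonneg_left _ (by positivity)
          linarith
      _ ≤ C := le_mul_of_one_le_right hP0.le h2c
  have hC3 : lamMax ≤ C := by
    have e1 : lamMax ≤ lamMax ^ 2 := by nlinarith
    have e2 : lamMax ^ 2 ≤ P := le_mul_of_one_le_right (by positivity) h2b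
    have e3 : P ≤ C := le_mul_of_one_le_right hP0.le h2c
    linarith
  intro x r hr hr1
  -- choose m
  have hex : ∃ m : ℕ, ((lam ^ (m+1))⁻¹ : ℝ) ≤ r := by
    obtain ⟨n, hn⟩ := pow_unbounded_of_one_lt (r⁻¹) hlam
    refine ⟨n, ?_⟩
    have h1 : r⁻¹ ≤ lam ^ (n+1) := by
      calc r⁻¹ ≤ lam ^ n := hn.le
        _ ≤ lam ^ (n+1) := pow_le_pow_right₀ (le_of_lt hlam) (Nat.le_succ n)
    calc ((lam ^ (n+1))⁻¹ : ℝ) ≤ (r⁻¹)⁻¹ :=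
          inv_anti₀ (inv_pos.mpr hr) h1
      _ = r := inv_inv r
  obtain ⟨m, h1, h2⟩ : ∃ m : ℕ, ((lam ^ (m+1))⁻¹ : ℝ) ≤ r ∧ r ≤ ((lam ^ m)⁻¹ : ℝ) := by
    refine ⟨Nat.find hex, Nat.find_spec hex, ?_⟩
    rcases Nat.eq_zero_or_pos (Nat.find hex) with hm0 | hm0
    · rw [hm0]; simpa using hr1
    · obtain ⟨k, hk⟩ := Nat.exists_eq_succ_of_ne_zero (Nat.pos_iff_ne_zero.mp hm0)
      have hmin := Nat.find_min hex (m := k) (by omega)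
      rw [hk]
      push_neg at hmin
      exact hmin.le
  -- r^δ bounds
  have hrδ1 : ((lamMax ^ (m+1))⁻¹ : ℝ) ≤ r ^ δ := by
    rw [← hkey (m+1)]
    exact Real.rpow_le_rpow (by positivity) h1 hδ.le
  have hrδ2 : r ^ δ ≤ ((lamMax ^ m)⁻¹ : ℝ) := by
    rw [← hkey m]
    exact Real.rpow_le_rpow hr.le h2 hδ.le
  have hrδ0 : 0 < r ^ δ := Real.rpow_pos_of_pos hr δ
  -- cylinder measure
  have hcyl : ∀ k : ℕ, μ {y : SigmaA A | ∀ i ≤ k, y.1 i = x.1 i} =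
      ENNReal.ofReal (v (x.1 0) * u (x.1 k) / lamMax ^ k) :=
    fun k => hμ k x.1 (fun i _ => x.2 i)
  constructor
  · -- lower bound
    have hsub : {y : SigmaA A | ∀ i ≤ m, y.1 i = x.1 i} ⊆ {y | d x y ≤ r} := by
      intro y hy
      by_cases hne : x.1 = y.1
      · have : x = y := Subtype.ext hne
        simp [this, hd0, hr.le]
      · have hdxy := hd x y hne
        set n := Nat.find (Function.ne_iff.mp hne) with hndef
        have hspec : x.1 n ≠ y.1 n := Nat.find_spec (Function.ne_iff.mp hne)
        have hn : m + 1 ≤ n := by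
          by_contra hcon
          push_neg at hcon
          exact hspec ((hy n (by omega))).symm
        show d x y ≤ r
        rw [hdxy]
        have : (lam : ℝ) ^ (-(n:ℤ)) = (lam ^ n)⁻¹ := by
          rw [zpow_neg, zpow_natCast]
        rw [this]
        calc ((lam ^ n)⁻¹ : ℝ) ≤ (lam ^ (m+1))⁻¹ := by
              apply inv_anti₀ (by positivity)
              exact pow_le_pow_right₀ (le_of_lt hlam) hn
          _ ≤ r := h1
    calc ENNReal.ofReal (C⁻¹ * r ^ δ)
        ≤ ENNReal.ofReal (v (x.1 0) * u (x.1 m) / lamMax ^ m) := by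
          apply ENNReal.ofReal_le_ofReal
          have e1 : C⁻¹ * r ^ δ ≤ (mu * mv) * (lamMax ^ m)⁻¹ := by
            apply mul_le_mul hCinv hrδ2 hrδ0.le (mul_pos hmu hmv).le
          refine e1.trans ?_
          rw [div_eq_mul_inv]
          apply mul_le_mul _ le_rfl (by positivity) (mul_pos (hv _) (hu _)).le
          have := hi₁ (x.1 m); have := hi₂ (x.1 0)
          nlinarith [hu (x.1 m), hv (x.1 0)]
      _ = μ {y : SigmaA A | ∀ i ≤ m, y.1 i = x.1 i} := (hcyl m).symm
      _ ≤ μ {y | d x y ≤ r} := measure_mono hsub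
  · -- upper bound
    rcases Nat.eq_zero_or_pos m with hm0 | hm0
    · -- m = 0 : whole space
      have huniv : μ (Set.univ : Set (SigmaA A)) ≤ 1 := by
        have hsub : (Set.univ : Set (SigmaA A)) ⊆
            ⋃ j : Fin N, {y : SigmaA A | ∀ i ≤ 0, y.1 i = (fun _ => j) i} := by
          intro y _
          refine Set.mem_iUnion.mpr ⟨y.1 0, ?_⟩
          intro i hi
          have : i = 0 := Nat.le_zero.mp hi
          subst this; rfl
        calc μ Set.univ ≤ μ (⋃ j : Fin N, {y : SigmaA A | ∀ i ≤ 0, y.1 i = (fun _ => j) i}) :=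
              measure_mono hsub
          _ ≤ ∑' j : Fin N, μ {y : SigmaA A | ∀ i ≤ 0, y.1 i = (fun _ => j) i} :=
              measure_iUnion_le _
          _ = ∑ j : Fin N, ENNReal.ofReal (v j * u j / lamMax ^ 0) := by
              rw [tsum_fintype]
              congr 1
              ext j
              exact hμ 0 (fun _ => j) (fun i hi => by omega)
          _ = ENNReal.ofReal (∑ j : Fin N, v j * u j) := by
              rw [← ENNReal.ofReal_sum_of_nonneg]
              · congr 1; apply Finset.sum_congr rfl; intro j _; rw [pow_zero, div_one]
              · intro j _
                have := hu j; have := hv j; positivity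
          _ = 1 := by
              have : ∑ j : Fin N, v j * u j = 1 := by
                rw [← hnorm]; apply Finset.sum_congr rfl; intro j _; ring
              rw [this, ENNReal.ofReal_one]
      have hone : (1:ℝ) ≤ C * r ^ δ := by
        have : ((lamMax:ℝ))⁻¹ ≤ r ^ δ := by
          have := hrδ1; rw [hm0] at this; simpa using this
        calc (1:ℝ) = lamMax * lamMax⁻¹ := by field_simp
          _ ≤ C * r ^ δ := mul_le_mul hC3 this (by positivity) (by linarith)
      calc μ {y | d x y ≤ r} ≤ μ Set.univ := measure_mono (Set.subset_univ _)
        _ ≤ 1 := huniv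
        _ ≤ ENNReal.ofReal (C * r ^ δ) := by
            rw [← ENNReal.ofReal_one]; exact ENNReal.ofReal_le_ofReal hone
    · -- m ≥ 1
      obtain ⟨k, hk⟩ := Nat.exists_eq_succ_of_ne_zero (Nat.pos_iff_ne_zero.mp hm0)
      have hsub : {y | d x y ≤ r} ⊆ {y : SigmaA A | ∀ i ≤ k, y.1 i = x.1 i} := by
        intro y hy
        by_cases hne : x.1 = y.1
        · intro i _; exact (congrFun hne i).symm
        · have hdxy := hd x y hne
          set n := Nat.find (Function.ne_iff.mp hne) with hndef
          have hdle : d x y ≤ r := hy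
          rw [hdxy] at hdle
          have hzp : (lam : ℝ) ^ (-(n:ℤ)) = (lam ^ n)⁻¹ := by
            rw [zpow_neg, zpow_natCast]
          rw [hzp] at hdle
          have hmn : m ≤ n := by
            by_contra hcon
            push_neg at hcon
            have hlt : ((lam ^ m)⁻¹ : ℝ) < (lam ^ n)⁻¹ := by
              apply inv_strictAnti₀ (by positivity)
              exact pow_lt_pow_right₀ hlam hcon
            have := hdle.trans h2
            linarith
          intro i hi
          have hin : i < n := by omega
          have := Nat.find_min (Function.ne_iff.mp hne) hin
          push_neg at this
          exact this.symm
      calc μ {y | d x y ≤ r} ≤ μ {y : SigmaA A | ∀ i ≤ k, y.1 i = x.1 i} :=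
            measure_mono hsub
        _ = ENNReal.ofReal (v (x.1 0) * u (x.1 k) / lamMax ^ k) := hcyl k
        _ ≤ ENNReal.ofReal (C * r ^ δ) := by
            apply ENNReal.ofReal_le_ofReal
            have e1 : v (x.1 0) * u (x.1 k) / lamMax ^ k
                ≤ (Mu * Mv) * lamMax ^ 2 * (lamMax ^ (m+1))⁻¹ := by
              have hpk : (0:ℝ) < lamMax ^ k := by positivity
              have hvp := hv (x.1 0); have hup := hu (x.1 k)
              have hb1 : v (x.1 0) * u (x.1 k) ≤ Mu * Mv := by
                nlinarith [hi₃ (x.1 k), hi₄ (x.1 0)]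
              have heq : lamMax ^ (m+1) = lamMax ^ k * lamMax ^ 2 := by
                rw [hk, show k+1+1 = k+2 from rfl, pow_add]
              rw [heq, div_eq_mul_inv, mul_inv]
              have h2p : (0:ℝ) < lamMax ^ 2 := by positivity
              calc v (x.1 0) * u (x.1 k) * (lamMax ^ k)⁻¹
                  ≤ (Mu * Mv) * (lamMax ^ k)⁻¹ :=
                    mul_le_mul_of_nonneg_right hb1 (by positivity)
                _ = (Mu * Mv) * lamMax ^ 2 * ((lamMax ^ k)⁻¹ * (lamMax ^ 2)⁻¹) := by
                    field_simp
                _ ≤ (Mu * Mv) * lamMax ^ 2 * ((lamMax ^ k)⁻¹ * (lamMax ^ 2)⁻¹) := le_rfl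
            refine e1.trans ?_
            calc (Mu * Mv) * lamMax ^ 2 * (lamMax ^ (m+1))⁻¹
                ≤ C * (lamMax ^ (m+1))⁻¹ := by
                  apply mul_le_mul_of_nonneg_right _ (by positivity)
                  calc (Mu * Mv) * lamMax ^ 2 = lamMax ^ 2 * (Mu * Mv) := by ring
                    _ ≤ C := hC2
              _ ≤ C * (r ^ δ) := by
                  apply mul_le_mul_of_nonneg_left hrδ1
                  linarith [hC3, hM0]
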